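/- For any positive integer k and any two distinct points (i,j), (i',j') of Z^2 with (k+1)i + kj ≡ (k+1)i' + kj' (mod 2k^2+2k+1), the Manhattan distance between (i,j) and (i',j') is at least 2k+1. -/

import Mathlib

theorem stmt_19 (k : ℕ) (hk : 1 ≤ k) (v w : ℤ × ℤ) (hne : v ≠ w)
    (h : ((((k : ℤ) + 1) * v.1 + (k : ℤ) * v.2 : ℤ) :
        ZMod (2 * k ^ 2 + 2 * k + 1))
      = ((((k : ℤ) + 1) * w.1 + (k : ℤ) * w.2 : ℤ) :
        ZMod (2 * k ^ 2 + 2 * k + 1))) :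
    2 * k + 1 ≤ (v.1 - w.1).natAbs + (v.2 - w.2).natAbs := by
  by_contra hlt
  push_neg at hlt
  set a : ℤ := v.1 - w.1 with ha
  set b : ℤ := v.2 - w.2 with hb
  rw [ZMod.intCast_eq_intCast_iff] at h
  have hdvd : ((2 * k ^ 2 + 2 * k + 1 : ℕ) : ℤ) ∣ ((k + 1) * a + k * b) := by
    have := h.dvd
    have h2 : ((k : ℤ) + 1) * w.2 = ((k:ℤ)+1) * w.2 := rfl
    have : ((2 * k ^ 2 + 2 * k + 1 : ℕ) : ℤ) ∣
        (((k : ℤ) + 1) * w.1 + (k : ℤ) * w.2 - (((k : ℤ) + 1) * v.1 + (k : ℤ) * v.2)) := this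
    have := dvd_neg.mpr this
    convert this using 1
    · rfl
    rw [ha, hb]; ring
  have hAB : (a.natAbs : ℤ) + (b.natAbs : ℤ) ≤ 2 * k := by
    have : a.natAbs + b.natAbs ≤ 2 * k := by omega
    exact_mod_cast this
  have hA := Int.abs_eq_natAbs a
  have hB := Int.abs_eq_natAbs b
  have habs : |a| + |b| ≤ 2 * k := by rw [hA, hB]; exact_mod_cast hAB
  have ha1 : a ≤ |a| := le_abs_self a
  have ha2 : -a ≤ |a| := neg_le_abs a
  have hb1 : b ≤ |b| := le_abs_self b
  have hb2 : -b ≤ |b| := neg_le_abs b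
  have habs0a : 0 ≤ |a| := abs_nonneg a
  have habs0b : 0 ≤ |b| := abs_nonneg b
  have hbound : |(k + 1) * a + k * b| < ((2 * k ^ 2 + 2 * k + 1 : ℕ) : ℤ) := by
    have hkz : (1 : ℤ) ≤ (k : ℤ) := by exact_mod_cast hk
    push_cast
    rw [abs_lt]
    constructor <;> nlinarith
  have hzero : (k + 1) * a + k * b = 0 := Int.eq_zero_of_abs_lt_dvd hdvd hbound
  set t : ℤ := -a - b with ht
  have hat : a = k * t := by rw [ht]; linarith [hzero]
  have hbt : b = -(k + 1) * t := by
    have hkz : (0 : ℤ) < (k : ℤ) := by exact_mod_cast hk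
    have hz2 : ((k : ℤ) + 1) * ((k : ℤ) * t) + (k : ℤ) * b = 0 := by
      rw [← hat]; exact hzero
    have : (k : ℤ) * (b + ((k : ℤ) + 1) * t) = 0 := by linear_combination hz2
    have := mul_eq_zero.mp this
    rcases this with h' | h'
    · exact absurd h' (by positivity)
    · linarith
  have htne : t ≠ 0 := by
    intro h0
    apply hne
    have ha0 : a = 0 := by rw [hat, h0, mul_zero]
    have hb0 : b = 0 := by rw [hbt, h0, mul_zero]
    have : v.1 = w.1 := by omega
    have : v.2 = w.2 := by omega
    exact Prod.ext (by omega) (by omega)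
  have htabs : (1 : ℤ) ≤ |t| := Int.one_le_abs (by exact htne)
  have : |a| + |b| = (2 * k + 1) * |t| := by
    rw [hat, hbt, abs_mul, abs_mul]
    have : |(k : ℤ)| = k := abs_of_nonneg (by positivity)
    rw [this]
    have : |-(((k : ℤ)) + 1)| = k + 1 := by
      rw [abs_neg]; exact abs_of_nonneg (by positivity)
    rw [this]; ring
  have hkz : (1 : ℤ) ≤ (k : ℤ) := by exact_mod_cast hk
  nlinarith [abs_nonneg t]
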